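/- Reduction of constant-domain satisfiability to expanding-domain satisfiability: let φ be a one-variable first-order modal formula with counting quantifiers, m = md(φ), E a unary predicate not occurring in φ, and let N ≥ 1 be a natural number such that if φ is satisfiable with respect to QK then φ is satisfiable in a constant domain model whose domain D has |D| ≤ N. Let ζ := ζ_exp ∧ ζ_dec ∧ ∀x□^{≤m}∀x(∃[≤N]x ⊤(x) ∧ ¬∃[≤N−1]x ⊤(x)), where ⊤(x) := P₀(x) ∨ ¬P₀(x) for a predicate P₀. Then φ is satisfiable with respect to QK if and only if E(x) ∧ ζ ∧ φ^E is satisfiable with respect to QK^exp. -/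

import Mathlib

/-! Syntax of one-variable first-order modal formulas with counting quantifiers:
    φ ::= P(x) | ¬φ | (φ∧φ) | ◇φ | ∃[≤c]x φ. -/

inductive Fml : Type
  | atom : ℕ → Fml
  | neg : Fml → Fml
  | conj : Fml → Fml → Fml
  | dia : Fml → Fml
  | countLe : ℕ → Fml → Fml
deriving DecidableEq

namespace Fml

/-- Subformulas. -/
def sub : Fml → Finset Fml
  | atom n => {atom n}
  | neg ψ => insert (neg ψ) ψ.sub
  | conj ψ χ => insert (conj ψ χ) (ψ.sub ∪ χ.sub)
  | dia ψ => insert (dia ψ) ψ.sub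
  | countLe c ψ => insert (countLe c ψ) ψ.sub

/-- Modal depth. -/
def md : Fml → ℕ
  | atom _ => 0
  | neg ψ => ψ.md
  | conj ψ χ => max ψ.md χ.md
  | dia ψ => ψ.md + 1
  | countLe _ ψ => ψ.md

/-- Capacity: the largest counting-quantifier subscript (0 if none). -/
def cpt : Fml → ℕ
  | atom _ => 0
  | neg ψ => ψ.cpt
  | conj ψ χ => max ψ.cpt χ.cpt
  | dia ψ => ψ.cpt
  | countLe c ψ => max c ψ.cpt

/-- Length of the formula as a string, counting subscripts written in binary. -/
def len : Fml → ℕ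
  | atom _ => 1
  | neg ψ => ψ.len + 1
  | conj ψ χ => ψ.len + χ.len + 1
  | dia ψ => ψ.len + 1
  | countLe c ψ => ψ.len + Nat.size c + 1

/-- Predicate symbols occurring in a formula. -/
def preds : Fml → Finset ℕ
  | atom n => {n}
  | neg ψ => ψ.preds
  | conj ψ χ => ψ.preds ∪ χ.preds
  | dia ψ => ψ.preds
  | countLe _ ψ => ψ.preds

def imp (ψ χ : Fml) : Fml := neg (conj ψ (neg χ))
def or (ψ χ : Fml) : Fml := neg (conj (neg ψ) (neg χ))
def iff (ψ χ : Fml) : Fml := conj (ψ.imp χ) (χ.imp ψ)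
def box (ψ : Fml) : Fml := neg (dia (neg ψ))
/-- `∃x ψ := ¬∃[≤0]x ψ`. -/
def ex (ψ : Fml) : Fml := neg (countLe 0 ψ)
/-- `∀x ψ := ∃[≤0]x ¬ψ`. -/
def fal (ψ : Fml) : Fml := countLe 0 (neg ψ)
/-- A tautology. -/
def top : Fml := neg (conj (atom 0) (neg (atom 0)))

/-- `boxIter n ψ` is `□^n ψ`. -/
def boxIter : ℕ → Fml → Fml
  | 0, ψ => ψ
  | n+1, ψ => (boxIter n ψ).box

/-- `boxLe m ψ` is `⋀_{k=0}^{m} □^k ψ`. -/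
def boxLe : ℕ → Fml → Fml
  | 0, ψ => ψ
  | n+1, ψ => conj (boxLe n ψ) (boxIter (n+1) ψ)

end Fml

/-- A first-order Kripke model `M = (W,R,D,d,I)` (unary predicates suffice for the
one-variable fragment). -/
structure KModel where
  W : Type
  R : W → W → Prop
  D : Type
  Dne : Nonempty D
  dom : W → Set D
  domNe : ∀ w, (dom w).Nonempty
  I : W → ℕ → Set D
  Isub : ∀ w p, I w p ⊆ dom w

/-- Satisfaction `M,w ⊨^a φ`. -/
def KModel.sat (M : KModel) : Fml → M.W → M.D → Prop
  | .atom p, w, a => a ∈ M.I w p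
  | .neg ψ, w, a => ¬ M.sat ψ w a
  | .conj ψ χ, w, a => M.sat ψ w a ∧ M.sat χ w a
  | .dia ψ, w, a => ∃ v, M.R w v ∧ M.sat ψ v a
  | .countLe c ψ, w, _ => {b | b ∈ M.dom w ∧ M.sat ψ w b}.encard ≤ (c : ℕ∞)

def KModel.constDom (M : KModel) : Prop := ∀ u v, M.dom u = M.dom v
def KModel.expDom (M : KModel) : Prop := ∀ u v, M.R u v → M.dom u ⊆ M.dom v
def KModel.decDom (M : KModel) : Prop := ∀ u v, M.R u v → M.dom v ⊆ M.dom u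

/-- Satisfiability with respect to QK (constant domains). -/
def satQK (φ : Fml) : Prop :=
  ∃ M : KModel, M.constDom ∧ ∃ w a, a ∈ M.dom w ∧ M.sat φ w a

/-- Satisfiability with respect to QK^exp (expanding domains). -/
def satQKexp (φ : Fml) : Prop :=
  ∃ M : KModel, M.expDom ∧ ∃ w a, a ∈ M.dom w ∧ M.sat φ w a

/-- Satisfiability with respect to QK^dec (decreasing domains). -/
def satQKdec (φ : Fml) : Prop :=
  ∃ M : KModel, M.decDom ∧ ∃ w a, a ∈ M.dom w ∧ M.sat φ w a

/-- `R` is the immediate-successor (parent–child) relation of a rooted irreflexive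
intransitive tree of depth ≤ m with root `r`. -/
def IsTreeOfDepth {W : Type} (R : W → W → Prop) (r : W) (m : ℕ) : Prop :=
  ∃ depth : W → ℕ,
    depth r = 0 ∧ (∀ w, depth w ≤ m) ∧
    (∀ u v, R u v → depth v = depth u + 1) ∧
    (∀ v, v ≠ r → ∃! u, R u v) ∧
    (∀ v, Relation.ReflTransGen R r v)

/-- Relativization φ^E of a formula to a fresh predicate E. -/
def relE (E : ℕ) : Fml → Fml
  | .atom p => .atom p
  | .neg ψ => .neg (relE E ψ)
  | .conj ψ χ => .conj (relE E ψ) (relE E χ)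
  | .dia ψ => .dia (relE E ψ)
  | .countLe c ψ => .countLe c (.conj (.atom E) (relE E ψ))

/-- `ζ_exp := □^{≤m} ∀x (E(x) → □E(x))`. -/
def zetaExp (E m : ℕ) : Fml :=
  Fml.boxLe m (Fml.fal ((Fml.atom E).imp (Fml.box (Fml.atom E))))

/-- `ζ_dec := ∀x □^{≤m} (◇E(x) → E(x))`. -/
def zetaDec (E m : ℕ) : Fml :=
  Fml.fal (Fml.boxLe m ((Fml.dia (Fml.atom E)).imp (Fml.atom E)))

/-- `⊤(x) := P₀(x) ∨ ¬P₀(x)`. -/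
def topP (P₀ : ℕ) : Fml := (Fml.atom P₀).or (Fml.neg (Fml.atom P₀))

/-- `∀x □^{≤m} ∀x (∃[≤N]x ⊤(x) ∧ ¬∃[≤N−1]x ⊤(x))`. -/
def zetaSize (P₀ m N : ℕ) : Fml :=
  Fml.fal (Fml.boxLe m (Fml.fal
    (Fml.conj (Fml.countLe N (topP P₀)) (Fml.neg (Fml.countLe (N - 1) (topP P₀))))))

/-- `ζ := ζ_exp ∧ ζ_dec ∧ ∀x□^{≤m}∀x(∃[≤N]x ⊤(x) ∧ ¬∃[≤N−1]x ⊤(x))`. -/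
def zeta78 (E P₀ m N : ℕ) : Fml :=
  Fml.conj (zetaExp E m) (Fml.conj (zetaDec E m) (zetaSize P₀ m N))

/-! ### Auxiliary lemmas -/

section Aux

/-- `k`-step reachability. -/
def steps {W : Type} (R : W → W → Prop) : ℕ → W → W → Prop
  | 0, u, v => u = v
  | n+1, u, v => ∃ x, R u x ∧ steps R n x v

lemma steps_snoc_iff {W : Type} (R : W → W → Prop) (n : ℕ) (u v : W) :
    steps R (n+1) u v ↔ ∃ x, steps R n u x ∧ R x v := by
  induction n generalizing u with
  | zero => simp [steps]
  | succ n ih =>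
    constructor
    · rintro ⟨x, hux, hxv⟩
      obtain ⟨y, hy, hyv⟩ := (ih x).1 hxv
      exact ⟨y, ⟨x, hux, hy⟩, hyv⟩
    · rintro ⟨y, ⟨x, hux, hxy⟩, hyv⟩
      exact ⟨x, hux, (ih x).2 ⟨y, hxy, hyv⟩⟩

variable (M : KModel)

lemma sat_box (ψ : Fml) (w : M.W) (a : M.D) :
    M.sat ψ.box w a ↔ ∀ v, M.R w v → M.sat ψ v a := by
  simp [Fml.box, KModel.sat]

lemma sat_imp (ψ χ : Fml) (w : M.W) (a : M.D) :
    M.sat (ψ.imp χ) w a ↔ (M.sat ψ w a → M.sat χ w a) := by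
  simp [Fml.imp, KModel.sat]

lemma sat_fal (ψ : Fml) (w : M.W) (a : M.D) :
    M.sat ψ.fal w a ↔ ∀ b ∈ M.dom w, M.sat ψ w b := by
  simp only [Fml.fal, KModel.sat, Nat.cast_zero, nonpos_iff_eq_zero, Set.encard_eq_zero,
    Set.eq_empty_iff_forall_notMem, Set.mem_setOf_eq, not_and, not_not]

lemma sat_topP (P₀ : ℕ) (w : M.W) (a : M.D) : M.sat (topP P₀) w a := by
  simp [topP, Fml.or, KModel.sat]

lemma sat_boxIter (n : ℕ) (ψ : Fml) (w : M.W) (a : M.D) :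
    M.sat (Fml.boxIter n ψ) w a ↔ ∀ v, steps M.R n w v → M.sat ψ v a := by
  induction n generalizing w with
  | zero => simp [Fml.boxIter, steps]
  | succ n ih =>
    simp only [Fml.boxIter, sat_box, steps]
    constructor
    · rintro h v ⟨x, hwx, hxv⟩
      exact (ih x).1 (h x hwx) v hxv
    · intro h v hwv
      exact (ih v).2 (fun u huv => h u ⟨v, hwv, huv⟩)

lemma sat_boxLe (n : ℕ) (ψ : Fml) (w : M.W) (a : M.D) :
    M.sat (Fml.boxLe n ψ) w a ↔ ∀ k ≤ n, ∀ v, steps M.R k w v → M.sat ψ v a := by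
  induction n with
  | zero =>
    simp only [Fml.boxLe]
    constructor
    · intro h k hk v hv
      interval_cases k
      cases hv; exact h
    · intro h; exact h 0 le_rfl w rfl
  | succ n ih =>
    show M.sat (Fml.boxLe n ψ) w a ∧ _ ↔ _
    rw [ih, sat_boxIter]
    constructor
    · rintro ⟨h1, h2⟩ k hk v hv
      by_cases hk' : k ≤ n
      · exact h1 k hk' v hv
      · have : k = n + 1 := by omega
        subst this; exact h2 v hv
    · intro h
      exact ⟨fun k hk v hv => h k (le_trans hk (Nat.le_succ n)) v hv,
        fun v hv => h (n+1) le_rfl v hv⟩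

end Aux

section Forward

/-- Pad a constant-domain model to domain `Fin N`, marking the old domain with `E`. -/
def padModel (M : KModel) (E : ℕ) {N : ℕ} (hN : 0 < N) (ι : M.D → Fin N) : KModel where
  W := M.W
  R := M.R
  D := Fin N
  Dne := ⟨⟨0, hN⟩⟩
  dom := fun _ => Set.univ
  domNe := fun _ => ⟨⟨0, hN⟩, trivial⟩
  I := fun w p => if p = E then ι '' M.dom w else ι '' M.I w p
  Isub := fun _ _ => Set.subset_univ _

lemma padModel_truth (M : KModel) (hc : M.constDom) (E : ℕ) {N : ℕ} (hN : 0 < N)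
    (ι : M.D → Fin N) (hι : Function.Injective ι) :
    ∀ ψ : Fml, E ∉ ψ.preds → ∀ (v : M.W) (a : M.D), a ∈ M.dom v →
      ((padModel M E hN ι).sat (relE E ψ) v (ι a) ↔ M.sat ψ v a) := by
  intro ψ
  induction ψ with
  | atom p =>
    intro hEp v a _
    have hpE : p ≠ E := by
      simp only [Fml.preds, Finset.mem_singleton] at hEp; exact fun h => hEp h.symm
    show ι a ∈ (if p = E then ι '' M.dom v else ι '' M.I v p) ↔ _
    rw [if_neg hpE, hι.mem_set_image]
    rfl
  | neg ψ ih =>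
    intro hEp v a ha
    exact not_congr (ih hEp v a ha)
  | conj ψ χ ihψ ihχ =>
    intro hEp v a ha
    rw [Fml.preds, Finset.mem_union] at hEp
    push_neg at hEp
    exact and_congr (ihψ hEp.1 v a ha) (ihχ hEp.2 v a ha)
  | dia ψ ih =>
    intro hEp v a ha
    exact exists_congr fun u => and_congr_right fun _ => ih hEp u a (hc u v ▸ ha)
  | countLe c ψ ih =>
    intro hEp v a _
    show {b | b ∈ (Set.univ : Set (Fin N)) ∧
        (padModel M E hN ι).sat (.conj (.atom E) (relE E ψ)) v b}.encard ≤ (c : ℕ∞) ↔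
      {b | b ∈ M.dom v ∧ M.sat ψ v b}.encard ≤ (c : ℕ∞)
    have hset : {b | b ∈ (Set.univ : Set (Fin N)) ∧
        (padModel M E hN ι).sat (.conj (.atom E) (relE E ψ)) v b} =
        ι '' {b | b ∈ M.dom v ∧ M.sat ψ v b} := by
      ext b'
      simp only [Set.mem_setOf_eq, Set.mem_image, Set.mem_univ, true_and]
      constructor
      · rintro ⟨hE', hψ'⟩
        have hE2 : b' ∈ (if E = E then ι '' M.dom v else ι '' M.I v E) := hE'
        rw [if_pos rfl] at hE2
        obtain ⟨b, hb, rfl⟩ := hE2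
        exact ⟨b, ⟨hb, (ih hEp v b hb).1 hψ'⟩, rfl⟩
      · rintro ⟨b, ⟨hb, hψb⟩, rfl⟩
        refine ⟨?_, (ih hEp v b hb).2 hψb⟩
        show ι b ∈ (if E = E then ι '' M.dom v else _)
        rw [if_pos rfl]
        exact ⟨b, hb, rfl⟩
    rw [hset, hι.encard_image]

lemma forward_dir (φ : Fml) (E P₀ N : ℕ) (hE : E ∉ φ.preds) (hN1 : 1 ≤ N)
    (M : KModel) (hc : M.constDom) (hfin : Finite M.D) (hcard : Nat.card M.D ≤ N)
    (w : M.W) (a : M.D) (ha : a ∈ M.dom w) (hsat : M.sat φ w a) :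
    satQKexp (Fml.conj (Fml.atom E) (Fml.conj (zeta78 E P₀ φ.md N) (relE E φ))) := by
  classical
  have hN : 0 < N := hN1
  have : Nonempty (M.D ↪ Fin N) := by
    have := Fintype.ofFinite M.D
    rw [Function.Embedding.nonempty_iff_card_le, Fintype.card_fin, ← Nat.card_eq_fintype_card]
    exact hcard
  obtain ⟨ι, hι⟩ := this
  set M' := padModel M E hN ι with hM'
  have huniv : ∀ v : M'.W, ∀ b : M'.D, b ∈ M'.dom v := fun _ _ => trivial
  have hIE : ∀ v : M.W, M'.I v E = ι '' M.dom v := by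
    intro v; show (if E = E then _ else _) = _; exact if_pos rfl
  have hsetuniv : ∀ v : M'.W, {c | c ∈ M'.dom v ∧ M'.sat (topP P₀) v c} = Set.univ := by
    intro v; ext c; simp [sat_topP, huniv]
  have hcardFinN : (Set.univ : Set (Fin N)).encard = (N : ℕ∞) := by
    rw [Set.encard_univ]
    simp
  refine ⟨M', fun _ _ _ => subset_rfl, w, ι a, trivial, ?_, ⟨?_, ?_, ?_⟩, ?_⟩
  · -- E(x)
    show ι a ∈ M'.I w E
    rw [hIE]; exact ⟨a, ha, rfl⟩
  · -- zetaExp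
    rw [zetaExp]; refine (sat_boxLe M' _ _ w _).2 ?_
    intro k _ v _
    refine (sat_fal M' _ v _).2 ?_
    intro b _
    rw [sat_imp]
    intro hbE
    rw [sat_box]
    intro u _
    show b ∈ M'.I u E
    have : b ∈ M'.I v E := hbE
    rw [hIE v] at this; rw [hIE u]
    rwa [hc u v]
  · -- zetaDec
    rw [zetaDec]; refine (sat_fal M' _ w _).2 ?_
    intro b _
    refine (sat_boxLe M' _ _ w _).2 ?_
    intro k _ v _
    rw [sat_imp]
    rintro ⟨u, _, hbu⟩
    show b ∈ M'.I v E
    have : b ∈ M'.I u E := hbu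
    rw [hIE u] at this; rw [hIE v]
    rwa [hc v u]
  · -- zetaSize
    rw [zetaSize]; refine (sat_fal M' _ w _).2 ?_
    intro b _
    refine (sat_boxLe M' _ _ w _).2 ?_
    intro k _ v _
    rw [sat_fal]
    intro b' _
    constructor
    · show {c | c ∈ M'.dom v ∧ M'.sat (topP P₀) v c}.encard ≤ (N : ℕ∞)
      rw [hsetuniv, show (Set.univ : Set M'.D).encard = (N : ℕ∞) from hcardFinN]
    · show ¬ ({c | c ∈ M'.dom v ∧ M'.sat (topP P₀) v c}.encard ≤ ((N - 1 : ℕ) : ℕ∞))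
      rw [hsetuniv, show (Set.univ : Set M'.D).encard = (N : ℕ∞) from hcardFinN, Nat.cast_le]
      omega
  · exact (padModel_truth M hc E hN ι hι φ hE w a ha).2 hsat

end Forward

section Backward

/-- Restrict an expanding-domain model to the constant domain `DE`, indexing worlds
by their distance from the root. -/
def constModel (M : KModel) (DE : Set M.D) (hne : DE.Nonempty) : KModel where
  W := M.W × ℕ
  R := fun p q => M.R p.1 q.1 ∧ q.2 = p.2 + 1
  D := M.D
  Dne := M.Dne
  dom := fun _ => DE
  domNe := fun _ => hne
  I := fun p n => M.I p.1 n ∩ DE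
  Isub := fun _ _ => Set.inter_subset_right

lemma constModel_truth (M : KModel) (w : M.W) (E m : ℕ) (a : M.D) (haE : a ∈ M.I w E)
    (hdom : ∀ k ≤ m, ∀ v, steps M.R k w v → M.dom v = M.dom w)
    (hfwd : ∀ k ≤ m, ∀ v, steps M.R k w v → M.I w E ⊆ M.I v E)
    (hbwd : ∀ k ≤ m, ∀ v, steps M.R k w v → ∀ b ∈ M.dom w, b ∈ M.I v E → b ∈ M.I w E) :
    ∀ ψ : Fml, ∀ (k : ℕ) (v : M.W) (b : M.D), steps M.R k w v → ψ.md + k ≤ m →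
      b ∈ M.I w E →
      ((constModel M (M.I w E) ⟨a, haE⟩).sat ψ (v, k) b ↔ M.sat (relE E ψ) v b) := by
  intro ψ
  induction ψ with
  | atom p =>
    intro k v b _ _ hb
    show b ∈ M.I v p ∩ M.I w E ↔ b ∈ M.I v p
    simp [hb]
  | neg ψ ih =>
    intro k v b hv hk hb
    exact not_congr (ih k v b hv hk hb)
  | conj ψ χ ihψ ihχ =>
    intro k v b hv hk hb
    have h1 : ψ.md + k ≤ m := by simp only [Fml.md] at hk; omega
    have h2 : χ.md + k ≤ m := by simp only [Fml.md] at hk; omega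
    exact and_congr (ihψ k v b hv h1 hb) (ihχ k v b hv h2 hb)
  | dia ψ ih =>
    intro k v b hv hk hb
    have hk' : ψ.md + (k + 1) ≤ m := by simp only [Fml.md] at hk; omega
    constructor
    · rintro ⟨⟨u, j⟩, ⟨hru, hj⟩, hsat⟩
      subst hj
      have hu : steps M.R (k+1) w u := (steps_snoc_iff _ _ _ _).2 ⟨v, hv, hru⟩
      exact ⟨u, hru, (ih (k+1) u b hu hk' hb).1 hsat⟩
    · rintro ⟨u, hru, hsat⟩
      have hu : steps M.R (k+1) w u := (steps_snoc_iff _ _ _ _).2 ⟨v, hv, hru⟩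
      exact ⟨(u, k+1), ⟨hru, rfl⟩, (ih (k+1) u b hu hk' hb).2 hsat⟩
  | countLe c ψ ih =>
    intro k v b hv hk hb
    have hkm : k ≤ m := by simp only [Fml.md] at hk; omega
    show {b' | b' ∈ M.I w E ∧ _}.encard ≤ (c : ℕ∞) ↔
      {b' | b' ∈ M.dom v ∧ M.sat (.conj (.atom E) (relE E ψ)) v b'}.encard ≤ (c : ℕ∞)
    have hset : {b' | b' ∈ M.I w E ∧ (constModel M (M.I w E) ⟨a, haE⟩).sat ψ (v, k) b'} =
        {b' | b' ∈ M.dom v ∧ M.sat (.conj (.atom E) (relE E ψ)) v b'} := by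
      ext b'
      simp only [Set.mem_setOf_eq]
      constructor
      · rintro ⟨hb', hsat⟩
        have hvE : b' ∈ M.I v E := hfwd k hkm v hv hb'
        exact ⟨M.Isub v E hvE, hvE, (ih k v b' hv hk hb').1 hsat⟩
      · rintro ⟨hbv, hvE, hsat⟩
        have hbw : b' ∈ M.dom w := (hdom k hkm v hv) ▸ hbv
        have hb' : b' ∈ M.I w E := hbwd k hkm v hv b' hbw hvE
        exact ⟨hb', (ih k v b' hv hk hb').2 hsat⟩
    rw [hset]

lemma backward_dir (φ : Fml) (E P₀ N : ℕ) (hN1 : 1 ≤ N)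
    (M : KModel) (hexp : M.expDom) (w : M.W) (a : M.D) (ha : a ∈ M.dom w)
    (hsat : M.sat (Fml.conj (Fml.atom E) (Fml.conj (zeta78 E P₀ φ.md N) (relE E φ))) w a) :
    satQK φ := by
  obtain ⟨haE, ⟨hzE, hzD, hzS⟩, hrel⟩ := hsat
  set m := φ.md
  have haE' : a ∈ M.I w E := haE
  -- sizes
  have hsize : ∀ k ≤ m, ∀ v, steps M.R k w v →
      (M.dom v).encard ≤ (N : ℕ∞) ∧ ¬ (M.dom v).encard ≤ ((N - 1 : ℕ) : ℕ∞) := by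
    intro k hk v hv
    rw [zetaSize, sat_fal] at hzS
    have h1 := hzS a ha
    rw [sat_boxLe] at h1
    have h2 := h1 k hk v hv
    rw [sat_fal] at h2
    obtain ⟨b', hb'⟩ := M.domNe v
    have h3 := h2 b' hb'
    have hset : {c | c ∈ M.dom v ∧ M.sat (topP P₀) v c} = M.dom v := by
      ext c; simp [sat_topP]
    obtain ⟨h4, h5⟩ := h3
    rw [show (M.sat (Fml.countLe N (topP P₀)) v b') =
      ({c | c ∈ M.dom v ∧ M.sat (topP P₀) v c}.encard ≤ (N : ℕ∞)) from rfl, hset] at h4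
    rw [show (M.sat (Fml.neg (Fml.countLe (N-1) (topP P₀))) v b') =
      ¬({c | c ∈ M.dom v ∧ M.sat (topP P₀) v c}.encard ≤ ((N-1 : ℕ) : ℕ∞)) from rfl,
      hset] at h5
    exact ⟨h4, h5⟩
  -- constant domains within distance m
  have hdom : ∀ k ≤ m, ∀ v, steps M.R k w v → M.dom v = M.dom w := by
    intro k
    induction k with
    | zero => intro _ v hv; cases hv; rfl
    | succ k ih =>
      intro hk v hv
      obtain ⟨x, hx, hxv⟩ := (steps_snoc_iff _ _ _ _).1 hv
      have hxw : M.dom x = M.dom w := ih (by omega) x hx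
      have hsub : M.dom x ⊆ M.dom v := hexp x v hxv
      have h1 : (M.dom v).encard ≤ (N : ℕ∞) := (hsize (k+1) hk v hv).1
      have h2 : ¬ (M.dom x).encard ≤ ((N - 1 : ℕ) : ℕ∞) := (hsize k (by omega) x hx).2
      have h3 : (N : ℕ∞) ≤ (M.dom x).encard := by
        have hlt : ((N - 1 : ℕ) : ℕ∞) < (M.dom x).encard := lt_of_not_ge h2
        have := (ENat.add_one_le_iff (n := (M.dom x).encard)
          (ENat.coe_ne_top (N - 1))).2 hlt
        calc (N : ℕ∞) = ((N - 1 : ℕ) : ℕ∞) + 1 := by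
              rw [show (1 : ℕ∞) = ((1 : ℕ) : ℕ∞) from rfl, ← Nat.cast_add]
              congr 1
              omega
          _ ≤ _ := this
      have hfin : (M.dom v).Finite := Set.finite_of_encard_le_coe h1
      have : M.dom x = M.dom v :=
        hfin.eq_of_subset_of_encard_le' hsub (le_trans h1 h3)
      rw [← this, hxw]
  -- forward persistence of E
  have hfwd : ∀ k ≤ m, ∀ v, steps M.R k w v → M.I w E ⊆ M.I v E := by
    intro k
    induction k with
    | zero => intro _ v hv; cases hv; exact subset_rfl
    | succ k ih =>
      intro hk v hv b hb
      obtain ⟨x, hx, hxv⟩ := (steps_snoc_iff _ _ _ _).1 hv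
      have hbx : b ∈ M.I x E := ih (by omega) x hx hb
      rw [zetaExp, sat_boxLe] at hzE
      have h1 := hzE k (by omega) x hx
      rw [sat_fal] at h1
      have h2 := h1 b (M.Isub x E hbx)
      rw [sat_imp] at h2
      have h3 := h2 hbx
      rw [sat_box] at h3
      exact h3 v hxv
  -- backward persistence of E
  have hbwd : ∀ k ≤ m, ∀ v, steps M.R k w v → ∀ b ∈ M.dom w, b ∈ M.I v E → b ∈ M.I w E := by
    intro k
    induction k with
    | zero => intro _ v hv; cases hv; exact fun b _ h => h
    | succ k ih =>
      intro hk v hv b hbw hbv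
      obtain ⟨x, hx, hxv⟩ := (steps_snoc_iff _ _ _ _).1 hv
      rw [zetaDec, sat_fal] at hzD
      have h1 := hzD b hbw
      rw [sat_boxLe] at h1
      have h2 := h1 k (by omega) x hx
      rw [sat_imp] at h2
      have hbx : b ∈ M.I x E := h2 ⟨v, hxv, hbv⟩
      exact ih (by omega) x hx b hbw hbx
  refine ⟨constModel M (M.I w E) ⟨a, haE'⟩, fun _ _ => rfl, (w, 0), a, haE', ?_⟩
  exact (constModel_truth M w E m a haE' hdom hfwd hbwd φ 0 w a rfl (by omega) haE').2 hrel

end Backward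

/-- given a bound N ≥ 1 on the domain size needed for constant-domain
satisfiability of φ, φ is satisfiable with respect to QK iff `E(x) ∧ ζ ∧ φ^E` is
satisfiable with respect to QK^exp. -/
theorem stmt_7 (φ : Fml) (E P₀ : ℕ) (hE : E ∉ φ.preds) (N : ℕ) (hN1 : 1 ≤ N)
    (hN : satQK φ → ∃ M : KModel, M.constDom ∧ Finite M.D ∧ Nat.card M.D ≤ N ∧
      ∃ w a, a ∈ M.dom w ∧ M.sat φ w a) :
    satQK φ ↔
      satQKexp (Fml.conj (Fml.atom E) (Fml.conj (zeta78 E P₀ φ.md N) (relE E φ))) := by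
  constructor
  · intro h
    obtain ⟨M, hc, hfin, hcard, w, a, ha, hsat⟩ := hN h
    exact forward_dir φ E P₀ N hE hN1 M hc hfin hcard w a ha hsat
  · rintro ⟨M, hexp, w, a, ha, hsat⟩
    exact backward_dir φ E P₀ N hN1 M hexp w a ha hsat
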